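/- Let p be a prime and α₁ ≤ α₂ ≤ α₃ be positive integers. Then ψ(Z_{p^{α₁}} × Z_{p^{α₂}} × Z_{p^{α₃}}) = ( p^{2α₃+α₂+α₁+1} + p^{3α₂+α₁+2} )/(p+1) − ( p^{3α₂+α₁+3} − p^{4α₁+3} )/(p²+p+1) − ( p^{4α₁+4} − 1 )/(p³+p²+p+1), where each displayed fraction is an integer (each denominator divides the corresponding numerator). -/

import Mathlib

open Finset

lemma card_pow_eq_one_of_dvd {G : Type*} [Group G] [Fintype G] [IsCyclic G] [DecidableEq G]
    {n : ℕ} (h : n ∣ Fintype.card G) : #(filter (fun a : G => a ^ n = 1) univ) = n := by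
  have hn : 0 < n := Nat.pos_of_dvd_of_pos h Fintype.card_pos
  refine le_antisymm (IsCyclic.card_pow_eq_one_le hn) ?_
  obtain ⟨g, hg⟩ := IsCyclic.exists_ofOrder_eq_natCard (α := G)
  rw [Nat.card_eq_fintype_card] at hg
  set x := g ^ (Fintype.card G / n) with hx
  have hox : orderOf x = n := by
    rw [hx, orderOf_pow, hg]
    rw [Nat.gcd_eq_right (Nat.div_dvd_of_dvd h)]
    exact Nat.div_div_self h Fintype.card_ne_zero
  have hxn : x ^ n = 1 := hox ▸ pow_orderOf_eq_one x
  calc n = (range n).card := (card_range n).symm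
    _ ≤ _ := by
        apply card_le_card_of_injOn (fun i => x ^ i)
        · intro i _
          have hgi : (g ^ i) ^ (Fintype.card G / n) = x ^ i := by
            rw [hx, ← pow_mul, ← pow_mul, mul_comm]
          simp only [coe_filter, mem_filter, mem_univ, true_and, Set.mem_setOf_eq, hgi]
          rw [← pow_mul, mul_comm, pow_mul, hxn, one_pow]
        · intro i hi j hj hij
          exact pow_injOn_Iio_orderOf (by simpa [hox] using mem_range.mp (mem_coe.mp hi))
            (by simpa [hox] using mem_range.mp (mem_coe.mp hj)) hij

lemma card_pow_eq_one_eq_gcd {G : Type*} [Group G] [Fintype G] [IsCyclic G] [DecidableEq G]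
    (n : ℕ) : #(filter (fun a : G => a ^ n = 1) univ) = Nat.gcd n (Fintype.card G) := by
  rw [← card_pow_eq_one_of_dvd (G := G) (Nat.gcd_dvd_right n (Fintype.card G))]
  apply congrArg
  apply filter_congr
  intro a _
  rw [← orderOf_dvd_iff_pow_eq_one, ← orderOf_dvd_iff_pow_eq_one, Nat.dvd_gcd_iff]
  exact ⟨fun h => ⟨h, orderOf_dvd_card⟩, fun h => h.1⟩

lemma card_pow_eq_one_prod {A B : Type*} [Monoid A] [Monoid B] [Fintype A] [Fintype B]
    [DecidableEq A] [DecidableEq B] (n : ℕ) :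
    #(filter (fun a : A × B => a ^ n = 1) univ)
      = #(filter (fun a : A => a ^ n = 1) univ) * #(filter (fun b : B => b ^ n = 1) univ) := by
  rw [← card_product, ← filter_product]
  congr 1
  · rw [univ_product_univ]
    apply filter_congr
    intro a _
    constructor
    · intro h; exact ⟨by rw [← Prod.pow_fst, h]; rfl, by rw [← Prod.pow_snd, h]; rfl⟩
    · intro ⟨h1, h2⟩; exact Prod.ext (by rw [Prod.pow_fst, h1]; rfl) (by rw [Prod.pow_snd, h2]; rfl)

lemma card_pow_eq_one_zmod (p α k : ℕ) [Fact p.Prime] :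
    #(filter (fun x : Multiplicative (ZMod (p ^ α)) => x ^ p ^ k = 1) univ) = p ^ min k α := by
  classical
  rw [card_pow_eq_one_eq_gcd]
  have hcard : Fintype.card (Multiplicative (ZMod (p ^ α))) = p ^ α := by
    simp [ZMod.card]
  rw [hcard]
  rcases le_total k α with h | h
  · rw [min_eq_left h, Nat.gcd_eq_left (pow_dvd_pow p h)]
  · rw [min_eq_right h, Nat.gcd_eq_right (pow_dvd_pow p h)]

/-- `psi G` is the sum of the orders of all elements of the finite group `G`. -/
noncomputable def psi (G : Type*) [Monoid G] [Fintype G] : ℕ := ∑ a : G, orderOf a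

theorem psi_reduction (p α₁ α₂ α₃ : ℕ) [Fact p.Prime]
    (h12 : α₁ ≤ α₂) (h23 : α₂ ≤ α₃) :
    (psi (Multiplicative (ZMod (p ^ α₁)) × Multiplicative (ZMod (p ^ α₂))
        × Multiplicative (ZMod (p ^ α₃))) : ℤ) =
      (p : ℤ) ^ (α₁ + α₂ + α₃) + ∑ k ∈ range α₃, ((p:ℤ) ^ (k+1) - (p:ℤ) ^ k) *
        ((p:ℤ) ^ (α₁ + α₂ + α₃) - (p:ℤ) ^ (min k α₁ + min k α₂ + min k α₃)) := by
  classical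
  have hp : p.Prime := Fact.out
  have hp1 : 1 < p := hp.one_lt
  have key : ∀ (β : ℕ), β ≤ α₃ → ∀ (x : Multiplicative (ZMod (p ^ β))), x ^ p ^ α₃ = 1 := by
    intro β hβ x
    obtain ⟨t, ht⟩ := pow_dvd_pow p hβ
    have hcard : Fintype.card (Multiplicative (ZMod (p ^ β))) = p ^ β := by simp [ZMod.card]
    have hx : x ^ p ^ β = 1 := by
      have := pow_card_eq_one (x := x); rwa [hcard] at this
    rw [ht, pow_mul, hx, one_pow]
  have hGexp : ∀ a : Multiplicative (ZMod (p ^ α₁)) × Multiplicative (ZMod (p ^ α₂))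
      × Multiplicative (ZMod (p ^ α₃)), a ^ p ^ α₃ = 1 := by
    intro a
    have e1 := key α₁ (h12.trans h23) a.1
    have e2 := key α₂ h23 a.2.1
    have e3 := key α₃ le_rfl a.2.2
    rw [Prod.ext_iff, Prod.ext_iff]
    refine ⟨?_, ?_, ?_⟩ <;>
      simp only [Prod.pow_fst, Prod.pow_snd, Prod.fst_one, Prod.snd_one, e1, e2, e3]
  have hcardG : (Fintype.card (Multiplicative (ZMod (p ^ α₁)) × Multiplicative (ZMod (p ^ α₂))
      × Multiplicative (ZMod (p ^ α₃))) : ℤ) = (p:ℤ) ^ (α₁ + α₂ + α₃) := by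
    simp only [Fintype.card_prod]
    rw [show Fintype.card (Multiplicative (ZMod (p ^ α₁))) = p ^ α₁ from by simp [ZMod.card],
      show Fintype.card (Multiplicative (ZMod (p ^ α₂))) = p ^ α₂ from by simp [ZMod.card],
      show Fintype.card (Multiplicative (ZMod (p ^ α₃))) = p ^ α₃ from by simp [ZMod.card]]
    push_cast
    ring
  have hT : ∀ k, (#(filter (fun a : Multiplicative (ZMod (p ^ α₁)) × Multiplicative (ZMod (p ^ α₂))
      × Multiplicative (ZMod (p ^ α₃)) => a ^ p ^ k = 1) univ) : ℤ)
      = (p:ℤ) ^ (min k α₁ + min k α₂ + min k α₃) := by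
    intro k
    rw [card_pow_eq_one_prod, card_pow_eq_one_prod,
      card_pow_eq_one_zmod, card_pow_eq_one_zmod, card_pow_eq_one_zmod]
    push_cast
    ring
  have horder : ∀ a : Multiplicative (ZMod (p ^ α₁)) × Multiplicative (ZMod (p ^ α₂))
      × Multiplicative (ZMod (p ^ α₃)), (orderOf a : ℤ)
      = 1 + ∑ k ∈ range α₃, ((p:ℤ) ^ (k+1) - (p:ℤ) ^ k) * (if a ^ p ^ k = 1 then 0 else 1) := by
    intro a
    obtain ⟨v, hv, hov⟩ := (Nat.dvd_prime_pow hp).mp (orderOf_dvd_of_pow_eq_one (hGexp a))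
    have hcond : ∀ k, (a ^ p ^ k = 1) ↔ v ≤ k := by
      intro k
      rw [← orderOf_dvd_iff_pow_eq_one, hov, Nat.pow_dvd_pow_iff_le_right hp1]
    have step1 : ∀ k ∈ range α₃, ((p:ℤ) ^ (k+1) - (p:ℤ) ^ k) * (if a ^ p ^ k = 1 then 0 else 1)
        = (if k ∈ range v then ((p:ℤ) ^ (k+1) - (p:ℤ) ^ k) else 0) := by
      intro k _
      by_cases hk : v ≤ k
      · rw [if_pos ((hcond k).mpr hk), if_neg (by simp [Nat.not_lt.mpr hk]), mul_zero]
      · rw [if_neg (fun h => hk ((hcond k).mp h)), if_pos (mem_range.mpr (Nat.not_le.mp hk)),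
          mul_one]
    rw [Finset.sum_congr rfl step1, Finset.sum_ite_mem,
      Finset.inter_eq_right.mpr (Finset.range_mono hv),
      Finset.sum_range_sub (fun k => (p:ℤ) ^ k), hov]
    push_cast
    ring
  rw [psi, Nat.cast_sum]
  rw [Finset.sum_congr rfl (fun a _ => horder a), Finset.sum_add_distrib, Finset.sum_const,
    Finset.card_univ, Finset.sum_comm]
  have hsum2 : ∀ k ∈ range α₃,
      (∑ a : Multiplicative (ZMod (p ^ α₁)) × Multiplicative (ZMod (p ^ α₂))
        × Multiplicative (ZMod (p ^ α₃)),
        ((p:ℤ) ^ (k+1) - (p:ℤ) ^ k) * (if a ^ p ^ k = 1 then 0 else 1))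
      = ((p:ℤ) ^ (k+1) - (p:ℤ) ^ k) *
        ((p:ℤ) ^ (α₁ + α₂ + α₃) - (p:ℤ) ^ (min k α₁ + min k α₂ + min k α₃)) := by
    intro k _
    rw [← Finset.mul_sum]
    congr 1
    have hflip : ∀ a : Multiplicative (ZMod (p ^ α₁)) × Multiplicative (ZMod (p ^ α₂))
        × Multiplicative (ZMod (p ^ α₃)),
        (if a ^ p ^ k = 1 then (0:ℤ) else 1) = 1 - (if a ^ p ^ k = 1 then 1 else 0) := by
      intro a; by_cases h : a ^ p ^ k = 1 <;> simp [h]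
    rw [Finset.sum_congr rfl (fun a _ => hflip a), Finset.sum_sub_distrib, Finset.sum_const,
      Finset.card_univ, Finset.sum_boole, hT k, nsmul_eq_mul, mul_one, hcardG]
  rw [Finset.sum_congr rfl hsum2, nsmul_eq_mul, mul_one, hcardG]

lemma psi_arith (p α₁ α₂ α₃ : ℕ) (h12 : α₁ ≤ α₂) (h23 : α₂ ≤ α₃) :
    (((p : ℤ) + 1) ∣ ((p : ℤ) ^ (2 * α₃ + α₂ + α₁ + 1) + (p : ℤ) ^ (3 * α₂ + α₁ + 2))) ∧
    (((p : ℤ) ^ 2 + p + 1) ∣ ((p : ℤ) ^ (3 * α₂ + α₁ + 3) - (p : ℤ) ^ (4 * α₁ + 3))) ∧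
    (((p : ℤ) ^ 3 + p ^ 2 + p + 1) ∣ ((p : ℤ) ^ (4 * α₁ + 4) - 1)) ∧
    ((p : ℤ) ^ (α₁ + α₂ + α₃) + ∑ k ∈ range α₃, ((p:ℤ) ^ (k+1) - (p:ℤ) ^ k) *
        ((p:ℤ) ^ (α₁ + α₂ + α₃) - (p:ℤ) ^ (min k α₁ + min k α₂ + min k α₃))) =
      ((p : ℤ) ^ (2 * α₃ + α₂ + α₁ + 1) + (p : ℤ) ^ (3 * α₂ + α₁ + 2)) / ((p : ℤ) + 1)
        - ((p : ℤ) ^ (3 * α₂ + α₁ + 3) - (p : ℤ) ^ (4 * α₁ + 3)) / ((p : ℤ) ^ 2 + p + 1)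
        - ((p : ℤ) ^ (4 * α₁ + 4) - 1) / ((p : ℤ) ^ 3 + p ^ 2 + p + 1) := by
  obtain ⟨m₂, rfl⟩ := Nat.exists_eq_add_of_le h12
  obtain ⟨m₃, rfl⟩ := Nat.exists_eq_add_of_le h23
  set P : ℤ := (p : ℤ) with hP
  set A : ℤ := P ^ α₁ with hA
  set B : ℤ := P ^ m₂ with hB
  set C : ℤ := P ^ m₃ with hC
  set g2 : ℤ := ∑ j ∈ range m₃, (P ^ 2) ^ j with hg2
  set g3 : ℤ := ∑ j ∈ range m₂, (P ^ 3) ^ j with hg3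
  set g4 : ℤ := ∑ j ∈ range α₁, (P ^ 4) ^ j with hg4
  have h2 : g2 * (P ^ 2 - 1) = C ^ 2 - 1 := by
    rw [hg2, geom_sum_mul, hC, ← pow_mul, ← pow_mul, Nat.mul_comm]
  have h3 : g3 * (P ^ 3 - 1) = B ^ 3 - 1 := by
    rw [hg3, geom_sum_mul, hB, ← pow_mul, ← pow_mul, Nat.mul_comm]
  have h4 : g4 * (P ^ 4 - 1) = A ^ 4 - 1 := by
    rw [hg4, geom_sum_mul, hA, ← pow_mul, ← pow_mul, Nat.mul_comm]
  set X : ℤ := A ^ 4 * B ^ 3 * P * ((P - 1) * g2 + 1) with hX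
  set Y : ℤ := A ^ 4 * P ^ 3 * (P - 1) * g3 with hY
  set Z : ℤ := (P - 1) * (g4 + A ^ 4) with hZ
  have e1 : P ^ (2 * (α₁ + m₂ + m₃) + (α₁ + m₂) + α₁ + 1) = P * A ^ 4 * B ^ 3 * C ^ 2 := by
    rw [hA, hB, hC]; ring
  have e2 : P ^ (3 * (α₁ + m₂) + α₁ + 2) = P ^ 2 * A ^ 4 * B ^ 3 := by
    rw [hA, hB]; ring
  have e3 : P ^ (3 * (α₁ + m₂) + α₁ + 3) = P ^ 3 * A ^ 4 * B ^ 3 := by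
    rw [hA, hB]; ring
  have e4 : P ^ (4 * α₁ + 3) = P ^ 3 * A ^ 4 := by rw [hA]; ring
  have e5 : P ^ (4 * α₁ + 4) = P ^ 4 * A ^ 4 := by rw [hA]; ring
  have c1 : P ^ (2 * (α₁ + m₂ + m₃) + (α₁ + m₂) + α₁ + 1) + P ^ (3 * (α₁ + m₂) + α₁ + 2)
      = (P + 1) * X := by
    rw [e1, e2, hX]; linear_combination (-(A ^ 4 * B ^ 3 * P)) * h2
  have c2 : P ^ (3 * (α₁ + m₂) + α₁ + 3) - P ^ (4 * α₁ + 3) = (P ^ 2 + P + 1) * Y := by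
    rw [e3, e4, hY]; linear_combination (-(A ^ 4 * P ^ 3)) * h3
  have c3 : P ^ (4 * α₁ + 4) - 1 = (P ^ 3 + P ^ 2 + P + 1) * Z := by
    rw [e5, hZ]; linear_combination -h4
  refine ⟨⟨X, c1⟩, ⟨Y, c2⟩, ⟨Z, c3⟩, ?_⟩
  have hne1 : (P + 1) ≠ 0 := by positivity
  have hne2 : (P ^ 2 + P + 1) ≠ 0 := by positivity
  have hne3 : (P ^ 3 + P ^ 2 + P + 1) ≠ 0 := by positivity
  rw [c1, c2, c3, Int.mul_ediv_cancel_left _ hne1, Int.mul_ediv_cancel_left _ hne2,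
    Int.mul_ediv_cancel_left _ hne3]
  have hterm : ∀ k ∈ range (α₁ + m₂ + m₃), ((P:ℤ) ^ (k+1) - P ^ k) *
        (P ^ (α₁ + (α₁ + m₂) + (α₁ + m₂ + m₃))
          - P ^ (min k α₁ + min k (α₁ + m₂) + min k (α₁ + m₂ + m₃)))
      = (P ^ (α₁ + (α₁ + m₂) + (α₁ + m₂ + m₃)) * P ^ (k+1)
          - P ^ (α₁ + (α₁ + m₂) + (α₁ + m₂ + m₃)) * P ^ k)
        - (P - 1) * (P ^ k * P ^ k * (P ^ min k α₁ * P ^ min k (α₁ + m₂))) := by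
    intro k hk
    have hk3 : min k (α₁ + m₂ + m₃) = k := min_eq_left (le_of_lt (mem_range.mp hk))
    rw [hk3, pow_add, pow_add, pow_succ]
    ring
  have hU : ∑ k ∈ range (α₁ + m₂ + m₃),
        (P ^ k * P ^ k * (P ^ min k α₁ * P ^ min k (α₁ + m₂)))
      = g4 + A ^ 4 * g3 + A ^ 4 * B ^ 3 * g2 := by
    rw [Finset.sum_range_add, Finset.sum_range_add]
    have s1 : ∑ k ∈ range α₁, (P ^ k * P ^ k * (P ^ min k α₁ * P ^ min k (α₁ + m₂))) = g4 := by
      rw [hg4]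
      apply Finset.sum_congr rfl
      intro k hk
      rw [min_eq_left (le_of_lt (mem_range.mp hk)),
        min_eq_left (le_of_lt (lt_of_lt_of_le (mem_range.mp hk) (Nat.le_add_right _ _)))]
      ring
    have s2 : ∑ j ∈ range m₂, (P ^ (α₁ + j) * P ^ (α₁ + j)
          * (P ^ min (α₁ + j) α₁ * P ^ min (α₁ + j) (α₁ + m₂))) = A ^ 4 * g3 := by
      rw [hg3, Finset.mul_sum]
      apply Finset.sum_congr rfl
      intro j hj
      rw [min_eq_right (Nat.le_add_right _ _),
        min_eq_left (Nat.add_le_add_left (le_of_lt (mem_range.mp hj)) _),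
        hA, pow_add]
      ring
    have s3 : ∑ j ∈ range m₃, (P ^ (α₁ + m₂ + j) * P ^ (α₁ + m₂ + j)
          * (P ^ min (α₁ + m₂ + j) α₁ * P ^ min (α₁ + m₂ + j) (α₁ + m₂)))
        = A ^ 4 * B ^ 3 * g2 := by
      rw [hg2, Finset.mul_sum]
      apply Finset.sum_congr rfl
      intro j hj
      rw [min_eq_right (by omega), min_eq_right (Nat.le_add_right _ _), hA, hB, pow_add, pow_add]
      ring
    rw [s1, s2, s3]
  have hsum : ∑ k ∈ range (α₁ + m₂ + m₃), ((P:ℤ) ^ (k+1) - P ^ k) *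
        (P ^ (α₁ + (α₁ + m₂) + (α₁ + m₂ + m₃))
          - P ^ (min k α₁ + min k (α₁ + m₂) + min k (α₁ + m₂ + m₃)))
      = A ^ 4 * B ^ 3 * C ^ 2 - A ^ 3 * B ^ 2 * C
        - (P - 1) * (g4 + A ^ 4 * g3 + A ^ 4 * B ^ 3 * g2) := by
    rw [Finset.sum_congr rfl hterm, Finset.sum_sub_distrib,
      Finset.sum_range_sub (fun k => P ^ (α₁ + (α₁ + m₂) + (α₁ + m₂ + m₃)) * P ^ k),
      ← Finset.mul_sum, hU, hA, hB, hC]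
    ring
  rw [hsum, hX, hY, hZ, show P ^ (α₁ + (α₁ + m₂) + (α₁ + m₂ + m₃)) = A ^ 3 * B ^ 2 * C from by
    rw [hA, hB, hC]; ring]
  linear_combination (-(A ^ 4 * B ^ 3)) * h2 + (A ^ 4 * (P - 1)) * h3

theorem psi_rank_three (p α₁ α₂ α₃ : ℕ) [Fact p.Prime]
    (h1 : 1 ≤ α₁) (h12 : α₁ ≤ α₂) (h23 : α₂ ≤ α₃) :
    (((p : ℤ) + 1) ∣ ((p : ℤ) ^ (2 * α₃ + α₂ + α₁ + 1) + (p : ℤ) ^ (3 * α₂ + α₁ + 2))) ∧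
    (((p : ℤ) ^ 2 + p + 1) ∣ ((p : ℤ) ^ (3 * α₂ + α₁ + 3) - (p : ℤ) ^ (4 * α₁ + 3))) ∧
    (((p : ℤ) ^ 3 + p ^ 2 + p + 1) ∣ ((p : ℤ) ^ (4 * α₁ + 4) - 1)) ∧
    (psi (Multiplicative (ZMod (p ^ α₁)) × Multiplicative (ZMod (p ^ α₂))
        × Multiplicative (ZMod (p ^ α₃))) : ℤ) =
      ((p : ℤ) ^ (2 * α₃ + α₂ + α₁ + 1) + (p : ℤ) ^ (3 * α₂ + α₁ + 2)) / ((p : ℤ) + 1)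
        - ((p : ℤ) ^ (3 * α₂ + α₁ + 3) - (p : ℤ) ^ (4 * α₁ + 3)) / ((p : ℤ) ^ 2 + p + 1)
        - ((p : ℤ) ^ (4 * α₁ + 4) - 1) / ((p : ℤ) ^ 3 + p ^ 2 + p + 1) := by
  obtain ⟨d1, d2, d3, heq⟩ := psi_arith p α₁ α₂ α₃ h12 h23
  refine ⟨d1, d2, d3, ?_⟩
  rw [psi_reduction p α₁ α₂ α₃ h12 h23]
  exact heq
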